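/- For any x = (x¹,...,x^d) ∈ (P_n)^d, one has EMD(x) ≥ (1/(d-1)) ∑_{1 ≤ k < ℓ ≤ d} EMD(x^k, x^ℓ), with equality if and only if X^{(2)}_j = X^{(3)}_j = ... = X^{(d-1)}_j for all 1 ≤ j ≤ n. -/

import Mathlib

open Finset

/-- The cumulative sum `X_j = x₁ + ⋯ + x_j` of `x ∈ ℝ^{n+1}`. -/
noncomputable def cdf {n : ℕ} (x : Fin (n + 1) → ℝ) (j : ℕ) : ℝ :=
  ∑ k : Fin (n + 1), if (k : ℕ) < j then x k else 0

/-- The `i`-th smallest component (0-indexed) of the tuple `y`. -/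
noncomputable def sortedNth {d : ℕ} (y : Fin d → ℝ) (i : ℕ) : ℝ :=
  if h : i < d then y (Tuple.sort y ⟨i, h⟩) else 0

/-- `EMD(x) ≥ (1/(d-1)) ∑_{k<ℓ} EMD(x^k, x^ℓ)`, with equality iff
`X^{(2)}_j = ⋯ = X^{(d-1)}_j` for all `1 ≤ j ≤ n` (0-indexed sorted positions
`1, …, d-2`). -/
-- sortedNth is monotone on [0, d)
lemma sortedNth_le {d : ℕ} (y : Fin d → ℝ) {i i' : ℕ} (h : i ≤ i') (h' : i' < d) :
    sortedNth y i ≤ sortedNth y i' := by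
  have hi : i < d := lt_of_le_of_lt h h'
  rw [sortedNth, sortedNth, dif_pos hi, dif_pos h']
  exact Tuple.monotone_sort y (show (⟨i, hi⟩ : Fin d) ≤ ⟨i', h'⟩ from h)

-- full double sum = 2 * pair sum
lemma pair_half {d : ℕ} (y : Fin d → ℝ) :
    ∑ k : Fin d, ∑ l : Fin d, |y k - y l|
      = 2 * ∑ p ∈ Finset.univ.filter (fun p : Fin d × Fin d => p.1 < p.2), |y p.1 - y p.2| := by
  have hpt : ∑ k : Fin d, ∑ l : Fin d, |y k - y l| = ∑ p : Fin d × Fin d, |y p.1 - y p.2| :=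
    (Fintype.sum_prod_type (f := fun p : Fin d × Fin d => |y p.1 - y p.2|)).symm
  rw [hpt, ← Finset.sum_filter_add_sum_filter_not Finset.univ (fun p : Fin d × Fin d => p.1 < p.2)]
  have h2 : ∑ p ∈ Finset.univ.filter (fun p : Fin d × Fin d => ¬ p.1 < p.2), |y p.1 - y p.2|
      = ∑ p ∈ Finset.univ.filter (fun p : Fin d × Fin d => p.1 < p.2), |y p.1 - y p.2| := by
    rw [← Finset.sum_filter_add_sum_filter_not
      (Finset.univ.filter (fun p : Fin d × Fin d => ¬ p.1 < p.2))
      (fun p : Fin d × Fin d => p.2 < p.1)]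
    have hzero : ∑ p ∈ (Finset.univ.filter (fun p : Fin d × Fin d => ¬ p.1 < p.2)).filter
        (fun p => ¬ p.2 < p.1), |y p.1 - y p.2| = 0 := by
      apply Finset.sum_eq_zero
      intro p hp
      simp only [Finset.mem_filter] at hp
      have : p.1 = p.2 := le_antisymm (not_lt.1 hp.2) (not_lt.1 hp.1.2)
      rw [this]; simp
    have hswap : ∑ p ∈ (Finset.univ.filter (fun p : Fin d × Fin d => ¬ p.1 < p.2)).filter
        (fun p => p.2 < p.1), |y p.1 - y p.2|
        = ∑ p ∈ Finset.univ.filter (fun p : Fin d × Fin d => p.1 < p.2), |y p.1 - y p.2| := by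
      apply Finset.sum_nbij' (fun p => (p.2, p.1)) (fun p => (p.2, p.1))
      · intro p hp; simp only [Finset.mem_filter] at hp ⊢
        exact ⟨Finset.mem_univ _, hp.2⟩
      · intro p hp; simp only [Finset.mem_filter] at hp ⊢
        exact ⟨⟨Finset.mem_univ _, not_lt.2 hp.2.le⟩, hp.2⟩
      · intro p _; rfl
      · intro p _; rfl
      · intro p _; exact abs_sub_comm _ _
    rw [hzero, hswap, add_zero]
  rw [h2]; ring

-- invariance of double sum under permutation
lemma double_sum_perm {d : ℕ} (y : Fin d → ℝ) (σ : Equiv.Perm (Fin d)) :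
    ∑ k : Fin d, ∑ l : Fin d, |y (σ k) - y (σ l)|
      = ∑ k : Fin d, ∑ l : Fin d, |y k - y l| := by
  rw [Equiv.sum_comp σ (fun k => ∑ l : Fin d, |y k - y (σ l)|)]
  exact Finset.sum_congr rfl fun k _ => Equiv.sum_comp σ (fun l => |y k - y l|)

-- telescoping
lemma telescope (Z : ℕ → ℝ) {a b : ℕ} (h : a ≤ b) :
    ∑ t ∈ Finset.Ico a b, (Z (t + 1) - Z t) = Z b - Z a := by
  induction b, h using Nat.le_induction with
  | base => simp
  | succ b hab ih =>
      rw [Finset.sum_Ico_succ_top (by omega), ih]; ring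

-- cardinalities in Fin d
lemma card_le_filter {d t : ℕ} (ht : t < d) :
    (Finset.univ.filter (fun a : Fin d => (a : ℕ) ≤ t)).card = t + 1 := by
  rw [Finset.card_filter]
  rw [Fin.sum_univ_eq_sum_range (fun i => if i ≤ t then 1 else 0) d]
  rw [← Finset.card_filter]
  have h2 : (Finset.range d).filter (fun i => i ≤ t) = Finset.range (t + 1) := by
    ext i; simp; omega
  rw [h2, Finset.card_range]

lemma card_gt_filter {d t : ℕ} :
    (Finset.univ.filter (fun b : Fin d => t < (b : ℕ))).card = d - (t + 1) := by
  rw [Finset.card_filter]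
  rw [Fin.sum_univ_eq_sum_range (fun i => if t < i then 1 else 0) d]
  rw [← Finset.card_filter]
  have : (Finset.range d).filter (fun i => t < i) = Finset.Ico (t + 1) d := by
    ext i; simp; omega
  rw [this, Nat.card_Ico]

lemma sorted_pair_sum {d : ℕ} (y : Fin d → ℝ) :
    ∑ p ∈ Finset.univ.filter (fun p : Fin d × Fin d => p.1 < p.2), |y p.1 - y p.2|
      = ∑ t ∈ Finset.range (d - 1),
          (((t + 1) * (d - (t + 1)) : ℕ) : ℝ) * (sortedNth y (t + 1) - sortedNth y t) := by
  classical
  have h1 : ∑ p ∈ Finset.univ.filter (fun p : Fin d × Fin d => p.1 < p.2), |y p.1 - y p.2|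
      = ∑ p ∈ Finset.univ.filter (fun p : Fin d × Fin d => p.1 < p.2),
          |sortedNth y (p.1 : ℕ) - sortedNth y (p.2 : ℕ)| := by
    have e1 := pair_half y
    have e2 := pair_half (fun k => y (Tuple.sort y k))
    have e3 := double_sum_perm y (Tuple.sort y)
    have e4 : ∑ p ∈ Finset.univ.filter (fun p : Fin d × Fin d => p.1 < p.2),
        |y (Tuple.sort y p.1) - y (Tuple.sort y p.2)|
        = ∑ p ∈ Finset.univ.filter (fun p : Fin d × Fin d => p.1 < p.2),
          |sortedNth y (p.1 : ℕ) - sortedNth y (p.2 : ℕ)| := by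
      refine Finset.sum_congr rfl fun p _ => ?_
      rw [sortedNth, sortedNth, dif_pos p.1.isLt, dif_pos p.2.isLt]
    rw [← e4]
    have := e1.symm.trans (e3.symm.trans e2)
    linarith
  rw [h1]
  have h2 : ∀ p ∈ Finset.univ.filter (fun p : Fin d × Fin d => p.1 < p.2),
      |sortedNth y (p.1 : ℕ) - sortedNth y (p.2 : ℕ)|
      = ∑ t ∈ Finset.range (d - 1), if (p.1 : ℕ) ≤ t ∧ t < (p.2 : ℕ) then
          (sortedNth y (t + 1) - sortedNth y t) else 0 := by
    intro p hp
    simp only [Finset.mem_filter] at hp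
    have hlt : (p.1 : ℕ) < (p.2 : ℕ) := hp.2
    rw [abs_sub_comm, abs_of_nonneg (sub_nonneg.2 (sortedNth_le y hlt.le p.2.isLt))]
    rw [← Finset.sum_filter]
    have hf : (Finset.range (d - 1)).filter (fun t => (p.1 : ℕ) ≤ t ∧ t < (p.2 : ℕ))
        = Finset.Ico (p.1 : ℕ) (p.2 : ℕ) := by
      have := p.2.isLt
      ext t; simp only [Finset.mem_filter, Finset.mem_range, Finset.mem_Ico]; omega
    rw [hf, telescope (fun t => sortedNth y t) hlt.le]
  rw [Finset.sum_congr rfl h2, Finset.sum_comm]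
  refine Finset.sum_congr rfl fun t ht => ?_
  rw [Finset.mem_range] at ht
  rw [← Finset.sum_filter, Finset.filter_filter]
  have hf2 : Finset.univ.filter (fun p : Fin d × Fin d => p.1 < p.2 ∧ (p.1 : ℕ) ≤ t ∧ t < (p.2 : ℕ))
      = Finset.univ.filter (fun p : Fin d × Fin d => (p.1 : ℕ) ≤ t ∧ t < (p.2 : ℕ)) := by
    ext p; simp only [Finset.mem_filter, Finset.mem_univ, true_and, Fin.lt_def]; omega
  rw [hf2]
  have hf3 : Finset.univ.filter (fun p : Fin d × Fin d => (p.1 : ℕ) ≤ t ∧ t < (p.2 : ℕ))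
      = (Finset.univ.filter (fun a : Fin d => (a : ℕ) ≤ t)) ×ˢ
        (Finset.univ.filter (fun b : Fin d => t < (b : ℕ))) := by
    ext p; simp only [Finset.mem_filter, Finset.mem_univ, true_and, Finset.mem_product]
  rw [hf3, Finset.sum_const, Finset.card_product, card_le_filter (by omega), card_gt_filter,
    nsmul_eq_mul]

lemma c_eq {d t : ℕ} (hd : 3 ≤ d) (ht : t < d - 1) :
    ((d : ℝ) - 1) * ((min (t+1) (d-(t+1)) : ℕ) : ℝ) - (((t+1) * (d-(t+1)) : ℕ) : ℝ)
      = ((min (t+1) (d-(t+1)) : ℕ) : ℝ) * (((min (t+1) (d-(t+1)) : ℕ) : ℝ) - 1) := by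
  have h1 : t + 1 ≤ d := by omega
  rcases le_total (t+1) (d-(t+1)) with h | h
  · rw [min_eq_left h]; push_cast [Nat.cast_sub h1]; ring
  · rw [min_eq_right h]; push_cast [Nat.cast_sub h1]; ring

lemma perj {d : ℕ} (hd : 3 ≤ d) (y : Fin d → ℝ) :
    ((d : ℝ) - 1) * (∑ i ∈ Finset.Ico 1 d, (min i (d - i) : ℝ)
        * (sortedNth y i - sortedNth y (i - 1)))
      - ∑ p ∈ Finset.univ.filter (fun p : Fin d × Fin d => p.1 < p.2), |y p.1 - y p.2|
    = ∑ t ∈ Finset.range (d - 1), ((min (t+1) (d-(t+1)) : ℕ) : ℝ)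
        * (((min (t+1) (d-(t+1)) : ℕ) : ℝ) - 1) * (sortedNth y (t+1) - sortedNth y t) := by
  rw [Finset.sum_Ico_eq_sum_range, sorted_pair_sum y, Finset.mul_sum, ← Finset.sum_sub_distrib]
  have hdm : d - 1 = d - 1 := rfl
  refine Finset.sum_congr rfl fun t ht => ?_
  rw [Finset.mem_range] at ht
  have e1 : 1 + t = t + 1 := by omega
  have e2 : t + 1 - 1 = t := by omega
  simp only [e1, e2]
  have hc := c_eq hd ht
  have h1 : t + 1 ≤ d := by omega
  have hmin : (min (↑(t+1) : ℝ) ((d : ℝ) - ↑(t+1))) = ((min (t+1) (d-(t+1)) : ℕ) : ℝ) := by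
    rw [Nat.cast_min, Nat.cast_sub h1]
  rw [hmin]
  linear_combination (sortedNth y (t+1) - sortedNth y t) * hc

lemma term_nonneg {d : ℕ} (hd : 3 ≤ d) (y : Fin d → ℝ) {t : ℕ} (ht : t < d - 1) :
    0 ≤ ((min (t+1) (d-(t+1)) : ℕ) : ℝ) * (((min (t+1) (d-(t+1)) : ℕ) : ℝ) - 1)
        * (sortedNth y (t+1) - sortedNth y t) := by
  have hm : 1 ≤ min (t+1) (d-(t+1)) := by omega
  have h1 : (1:ℝ) ≤ ((min (t+1) (d-(t+1)) : ℕ) : ℝ) := by exact_mod_cast hm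
  have hG : 0 ≤ sortedNth y (t+1) - sortedNth y t :=
    sub_nonneg.2 (sortedNth_le y (Nat.le_succ t) (by omega))
  exact mul_nonneg (mul_nonneg (by linarith) (by linarith)) hG

lemma zero_iff {d : ℕ} (hd : 3 ≤ d) (y : Fin d → ℝ) :
    (∑ t ∈ Finset.range (d-1), ((min (t+1) (d-(t+1)) : ℕ) : ℝ)
        * (((min (t+1) (d-(t+1)) : ℕ) : ℝ) - 1) * (sortedNth y (t+1) - sortedNth y t) = 0)
    ↔ ∀ i ∈ Finset.Icc 1 (d-2), sortedNth y i = sortedNth y 1 := by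
  rw [Finset.sum_eq_zero_iff_of_nonneg (fun t ht => term_nonneg hd y (Finset.mem_range.1 ht))]
  constructor
  · intro h
    have hgap : ∀ t, 1 ≤ t → t ≤ d - 3 → sortedNth y (t+1) = sortedNth y t := by
      intro t h1 h2
      have ht : t ∈ Finset.range (d-1) := Finset.mem_range.2 (by omega)
      have h0 := h t ht
      have hm : 2 ≤ min (t+1) (d-(t+1)) := by omega
      have hm' : (2:ℝ) ≤ ((min (t+1) (d-(t+1)) : ℕ) : ℝ) := by exact_mod_cast hm
      have hne : ((min (t+1) (d-(t+1)) : ℕ) : ℝ)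
          * (((min (t+1) (d-(t+1)) : ℕ) : ℝ) - 1) ≠ 0 := by nlinarith
      have := mul_eq_zero.1 h0
      rcases this with h' | h'
      · exact absurd h' hne
      · linarith [sub_eq_zero.1 h']
    have main : ∀ i, 1 ≤ i → i ≤ d - 2 → sortedNth y i = sortedNth y 1 := by
      intro i h1
      induction i, h1 using Nat.le_induction with
      | base => intro _; rfl
      | succ i hi ih =>
          intro h2
          rw [hgap i hi (by omega)]
          exact ih (by omega)
    intro i hi
    rw [Finset.mem_Icc] at hi
    exact main i hi.1 hi.2
  · intro h t ht
    rw [Finset.mem_range] at ht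
    by_cases h0 : t = 0
    · subst h0
      have e : min (0+1) (d-(0+1)) = 1 := by omega
      rw [e]; norm_num
    · by_cases h1 : t = d - 2
      · subst h1
        have e : min (d-2+1) (d-(d-2+1)) = 1 := by omega
        rw [e]; norm_num
      · have e1 : sortedNth y (t+1) = sortedNth y 1 :=
          h (t+1) (Finset.mem_Icc.2 (by omega))
        have e2 : sortedNth y t = sortedNth y 1 :=
          h t (Finset.mem_Icc.2 (by omega))
        rw [e1, e2]; ring

theorem stmt15 (n d : ℕ) (hn : 1 ≤ n) (hd : 3 ≤ d) (x : Fin d → Fin (n + 1) → ℝ)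
    (hx : ∀ i, (∀ m, 0 ≤ x i m) ∧ ∑ m, x i m = 1)
    (E P : ℝ)
    (hE : E = ∑ j ∈ Finset.Icc 1 n, ∑ i ∈ Finset.Ico 1 d, (min i (d - i) : ℝ)
        * (sortedNth (fun i' => cdf (x i') j) i - sortedNth (fun i' => cdf (x i') j) (i - 1)))
    (hP : P = ∑ p ∈ Finset.univ.filter (fun p : Fin d × Fin d => p.1 < p.2),
        ∑ j ∈ Finset.Icc 1 n, |cdf (x p.1) j - cdf (x p.2) j|) :
    E ≥ (1 / (d - 1 : ℝ)) * P ∧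
      (E = (1 / (d - 1 : ℝ)) * P ↔ ∀ j ∈ Finset.Icc 1 n, ∀ i ∈ Finset.Icc 1 (d - 2),
        sortedNth (fun i' => cdf (x i') j) i = sortedNth (fun i' => cdf (x i') j) 1) := by
  have hd1 : (0:ℝ) < (d:ℝ) - 1 := by
    have h3 : (3:ℝ) ≤ (d:ℝ) := by exact_mod_cast hd
    linarith
  have hne : ((d:ℝ) - 1) ≠ 0 := ne_of_gt hd1
  have hPE : ((d:ℝ)-1) * E - P = ∑ j ∈ Finset.Icc 1 n, ∑ t ∈ Finset.range (d-1),
      ((min (t+1) (d-(t+1)) : ℕ) : ℝ) * (((min (t+1) (d-(t+1)) : ℕ) : ℝ) - 1)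
        * (sortedNth (fun i' => cdf (x i') j) (t+1) - sortedNth (fun i' => cdf (x i') j) t) := by
    rw [hE, hP]
    rw [show (∑ p ∈ Finset.univ.filter (fun p : Fin d × Fin d => p.1 < p.2),
          ∑ j ∈ Finset.Icc 1 n, |cdf (x p.1) j - cdf (x p.2) j|)
        = ∑ j ∈ Finset.Icc 1 n, ∑ p ∈ Finset.univ.filter (fun p : Fin d × Fin d => p.1 < p.2),
          |cdf (x p.1) j - cdf (x p.2) j| from Finset.sum_comm]
    rw [Finset.mul_sum, ← Finset.sum_sub_distrib]
    exact Finset.sum_congr rfl fun j _ => perj hd (fun i' => cdf (x i') j)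
  have hDnonneg : 0 ≤ ((d:ℝ)-1) * E - P := by
    rw [hPE]
    exact Finset.sum_nonneg fun j _ => Finset.sum_nonneg fun t ht =>
      term_nonneg hd _ (Finset.mem_range.1 ht)
  constructor
  · rw [ge_iff_le]
    have he : (1/((d:ℝ)-1)) * P = P / ((d:ℝ)-1) := by ring
    rw [he, div_le_iff₀ hd1]
    linarith
  · constructor
    · intro hEq
      have hD0 : ((d:ℝ)-1) * E - P = 0 := by
        rw [hEq]; field_simp; ring
      rw [hPE] at hD0
      have hj := (Finset.sum_eq_zero_iff_of_nonneg (fun j _ => Finset.sum_nonneg fun t ht =>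
        term_nonneg hd (fun i' => cdf (x i') j) (Finset.mem_range.1 ht))).1 hD0
      intro j hj' i hi
      exact (zero_iff hd _).1 (hj j hj') i hi
    · intro hcond
      have hD0 : ((d:ℝ)-1) * E - P = 0 := by
        rw [hPE]
        exact Finset.sum_eq_zero fun j hj => (zero_iff hd _).2 (fun i hi => hcond j hj i hi)
      field_simp
      linarith
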